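/- Let H be a simply connected combinatorial strata structure endowed with a datum (N, {P_J}) of nodal strata, and let B be a nodal separating block of N in H. Then for every i ∈ I, the sets A_B(i) and B_B(i) are both nonempty, they are disjoint, and A_B(i) ∪ B_B(i) = H(1). -/

import Mathlib

/-- A combinatorial strata structure with minimal set of indices the (finite) type `I`:
an open subset of `𝒫(I)` (i.e. a family closed under taking subsets) containing all
singletons. -/
def IsCSS {I : Type*} (H : Set (Finset I)) : Prop :=
  (∀ J ∈ H, ∀ J' : Finset I, J' ⊆ J → J' ∈ H) ∧ ∀ i : I, ({i} : Finset I) ∈ H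

/-- `level H k` is `H(k)`, the set of strata of `H` with exactly `k` elements. -/
def level {I : Type*} (H : Set (Finset I)) (k : ℕ) : Set (Finset I) :=
  {J ∈ H | J.card = k}

/-- A `k`-path in `H`: a nonempty sequence of strata of `H(k)` such that the union of
any two consecutive entries lies in `H(k+1)`. -/
def IsKPath {I : Type*} [DecidableEq I] (H : Set (Finset I)) (k : ℕ)
    (γ : List (Finset I)) : Prop :=
  γ ≠ [] ∧ (∀ J ∈ γ, J ∈ level H k) ∧
    γ.Chain' fun J J' => (J ∪ J') ∈ level H (k + 1)

/-- The path `γ` joins `J` and `J'`. -/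
def Joins {I : Type*} (γ : List (Finset I)) (J J' : Finset I) : Prop :=
  γ.head? = some J ∧ γ.getLast? = some J'

/-- The subsupport of a path: the sequence of unions of consecutive entries. -/
def subSup {I : Type*} [DecidableEq I] (γ : List (Finset I)) : List (Finset I) :=
  List.zipWith (· ∪ ·) γ γ.tail

open Classical in
/-- `kappa B γ`: the number of entries of the subsupport of `γ` that belong to `B`. -/
noncomputable def kappa {I : Type*} [DecidableEq I] (B : Set (Finset I))
    (γ : List (Finset I)) : ℕ :=
  (subSup γ).countP fun J => decide (J ∈ B)

/-- `A` is `k`-connected in `H`: any two elements of `A` are joined by a `k`-path in `H`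
with support contained in `A`. -/
def KConnectedIn {I : Type*} [DecidableEq I] (H : Set (Finset I)) (k : ℕ)
    (A : Set (Finset I)) : Prop :=
  ∀ J ∈ A, ∀ J' ∈ A, ∃ γ : List (Finset I),
    IsKPath H k γ ∧ Joins γ J J' ∧ ∀ K ∈ γ, K ∈ A

/-- `C` is a `k`-connected component of `A` in `H`: a maximal nonempty `k`-connected
subset of `A`. -/
def IsKComponent {I : Type*} [DecidableEq I] (H : Set (Finset I)) (k : ℕ)
    (A C : Set (Finset I)) : Prop :=
  C.Nonempty ∧ C ⊆ A ∧ KConnectedIn H k C ∧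
    ∀ C' : Set (Finset I), C ⊆ C' → C' ⊆ A → KConnectedIn H k C' → C' = C

/-- `H` is 1-connected: `H(1)` is 1-connected in `H`. -/
def OneConnected {I : Type*} [DecidableEq I] (H : Set (Finset I)) : Prop :=
  KConnectedIn H 1 (level H 1)

/-- One-sided version of an elementary homotopic pair of 1-paths in `H`. -/
def ElemPairCore {I : Type*} [DecidableEq I] (H : Set (Finset I))
    (ε ε' : List (Finset I)) : Prop :=
  ε = ε'
  ∨ (∃ i₁ i₂ : I, ε = [{i₁}, {i₂}, {i₁}] ∧ ε' = [{i₁}])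
  ∨ (∃ i₁ i₂ i₃ : I, ε = [{i₁}, {i₂}] ∧ ε' = [{i₁}, {i₃}, {i₂}] ∧
      IsKPath H 2 [{i₁, i₃}, {i₃, i₂}])

/-- An elementary homotopic pair of 1-paths in `H` (up to swapping the two paths). -/
def ElemPair {I : Type*} [DecidableEq I] (H : Set (Finset I))
    (ε ε' : List (Finset I)) : Prop :=
  ElemPairCore H ε ε' ∨ ElemPairCore H ε' ε

/-- `γ₂` is obtained from `γ₁` by an elementary homotopy. -/
def ElemHomotopy {I : Type*} [DecidableEq I] (H : Set (Finset I))
    (γ₁ γ₂ : List (Finset I)) : Prop :=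
  ∃ δ ε₁ ε₂ ρ : List (Finset I),
    ElemPair H ε₁ ε₂ ∧ γ₁ = δ ++ ε₁ ++ ρ ∧ γ₂ = δ ++ ε₂ ++ ρ

/-- `γ` and `γ'` are homotopically equivalent in `H` with support in `A`: they are linked
by a finite chain of elementary homotopies in which every intermediate 1-path has
support in `A`. -/
def HomotopicIn {I : Type*} [DecidableEq I] (H A : Set (Finset I))
    (γ γ' : List (Finset I)) : Prop :=
  (IsKPath H 1 γ ∧ ∀ J ∈ γ, J ∈ A) ∧
    Relation.ReflTransGen
      (fun g₁ g₂ => ElemHomotopy H g₁ g₂ ∧ IsKPath H 1 g₂ ∧ ∀ J ∈ g₂, J ∈ A) γ γ'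

/-- A 1-connected subset `A ⊆ H(1)` is simply connected in `H`: any two 1-paths in `H`
with support in `A` joining the same strata are homotopically equivalent in `H` with
support in `A`. -/
def SimplyConnectedIn {I : Type*} [DecidableEq I] (H A : Set (Finset I)) : Prop :=
  KConnectedIn H 1 A ∧
    ∀ γ γ' : List (Finset I), IsKPath H 1 γ → IsKPath H 1 γ' →
      (∀ J ∈ γ, J ∈ A) → (∀ J ∈ γ', J ∈ A) →
      γ.head? = γ'.head? → γ.getLast? = γ'.getLast? →
      HomotopicIn H A γ γ'

/-- `H` is simply connected: `H(1)` is simply connected in `H`. -/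
def SimplyConnected {I : Type*} [DecidableEq I] (H : Set (Finset I)) : Prop :=
  SimplyConnectedIn H (level H 1)

/-- The closure of `A` in `H`: the strata of `H` containing some element of `A`. -/
def Cl {I : Type*} (H A : Set (Finset I)) : Set (Finset I) :=
  {J' ∈ H | ∃ J ∈ A, J ⊆ J'}

/-- A datum of nodal strata `(N, {P_J})` in `H`: a subset `N ⊆ H` together with, for each
`J ∈ N`, a partition `P_J = {J₊, J₋}` of `J` into two nonempty parts, such that for every
`J ∈ N` and `J' ⊆ J` one has `J' ∈ N` iff `J' ∩ J₊ ≠ ∅ ≠ J' ∩ J₋`, and in that case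
`P_{J'} = {J' ∩ J₊, J' ∩ J₋}`. -/
structure NodalDatum {I : Type*} [DecidableEq I] (H : Set (Finset I)) : Type _ where
  N : Set (Finset I)
  N_sub : N ⊆ H
  plus : Finset I → Finset I
  minus : Finset I → Finset I
  plus_nonempty : ∀ J ∈ N, (plus J).Nonempty
  minus_nonempty : ∀ J ∈ N, (minus J).Nonempty
  union_eq : ∀ J ∈ N, plus J ∪ minus J = J
  disj : ∀ J ∈ N, Disjoint (plus J) (minus J)
  mem_iff : ∀ J ∈ N, ∀ J' : Finset I, J' ⊆ J →
    (J' ∈ N ↔ (J' ∩ plus J).Nonempty ∧ (J' ∩ minus J).Nonempty)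
  part_eq : ∀ J ∈ N, ∀ J' : Finset I, J' ⊆ J → J' ∈ N →
    ({plus J', minus J'} : Set (Finset I)) = {J' ∩ plus J, J' ∩ minus J}

/-- `N*`: the set of uninterrupted nodal strata, i.e. `J ∈ N` with `Cl_H({J}) ⊆ N`. -/
def Nstar {I : Type*} [DecidableEq I] {H : Set (Finset I)} (D : NodalDatum H) :
    Set (Finset I) :=
  {J ∈ D.N | ∀ J' ∈ H, J ⊆ J' → J' ∈ D.N}

/-- A nodal block of `N` in `H`: a 2-connected component of `N(2) = N ∩ H(2)` in `H`. -/
def IsNodalBlock {I : Type*} [DecidableEq I] {H : Set (Finset I)} (D : NodalDatum H)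
    (B : Set (Finset I)) : Prop :=
  IsKComponent H 2 (D.N ∩ level H 2) B

/-- A nodal separating block: a nodal block contained in `N*`. -/
def IsSepBlock {I : Type*} [DecidableEq I] {H : Set (Finset I)} (D : NodalDatum H)
    (B : Set (Finset I)) : Prop :=
  IsNodalBlock D B ∧ B ⊆ Nstar D

/-- The separator set: the union of all nodal separating blocks. -/
def SepSet {I : Type*} [DecidableEq I] {H : Set (Finset I)} (D : NodalDatum H) :
    Set (Finset I) :=
  ⋃₀ {B | IsSepBlock D B}

/-- `A_B(i)`: the set of `{j} ∈ H(1)` joined to `{i}` by a 1-path `γ` in `H` with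
`κ_B(γ)` even. -/
def ABset {I : Type*} [DecidableEq I] (H B : Set (Finset I)) (i : I) : Set (Finset I) :=
  {J ∈ level H 1 | ∃ γ : List (Finset I),
    IsKPath H 1 γ ∧ Joins γ {i} J ∧ Even (kappa B γ)}

/-- `B_B(i)`: the set of `{j} ∈ H(1)` joined to `{i}` by a 1-path `γ` in `H` with
`κ_B(γ)` odd. -/
def BBset {I : Type*} [DecidableEq I] (H B : Set (Finset I)) (i : I) : Set (Finset I) :=
  {J ∈ level H 1 | ∃ γ : List (Finset I),
    IsKPath H 1 γ ∧ Joins γ {i} J ∧ Odd (kappa B γ)}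


section Aux

open Classical

variable {I : Type*} [DecidableEq I]

/-- Junction list between two paths. -/
def jn : Option (Finset I) → Option (Finset I) → List (Finset I)
  | some a, some b => [a ∪ b]
  | _, _ => []

lemma subSup_cons (a : Finset I) (l : List (Finset I)) :
    subSup (a :: l) = jn (some a) l.head? ++ subSup l := by
  cases l <;> rfl

lemma subSup_append (l₁ l₂ : List (Finset I)) :
    subSup (l₁ ++ l₂) = subSup l₁ ++ jn l₁.getLast? l₂.head? ++ subSup l₂ := by
  induction l₁ with
  | nil => simp [subSup, jn]
  | cons a l₁ ih =>
    rw [List.cons_append, subSup_cons, ih, subSup_cons]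
    cases l₁ with
    | nil => cases l₂ <;> simp [jn, subSup]
    | cons b t => simp [jn, List.getLast?_cons_cons, List.append_assoc]

/-- countP version of kappa on an arbitrary list. -/
noncomputable def kap (B : Set (Finset I)) (l : List (Finset I)) : ℕ :=
  l.countP fun J => decide (J ∈ B)

lemma kappa_eq_kap (B : Set (Finset I)) (γ : List (Finset I)) :
    kappa B γ = kap B (subSup γ) := rfl

lemma kap_append (B : Set (Finset I)) (l₁ l₂ : List (Finset I)) :
    kap B (l₁ ++ l₂) = kap B l₁ + kap B l₂ :=
  List.countP_append

lemma kappa_append (B : Set (Finset I)) (l₁ l₂ : List (Finset I)) :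
    kappa B (l₁ ++ l₂)
      = kappa B l₁ + kap B (jn l₁.getLast? l₂.head?) + kappa B l₂ := by
  rw [kappa_eq_kap, subSup_append, kap_append, kap_append, kappa_eq_kap, kappa_eq_kap]

lemma kap_singleton (B : Set (Finset I)) (z : Finset I) :
    kap B [z] = if z ∈ B then 1 else 0 := by
  by_cases h : z ∈ B <;> simp [kap, h]

lemma kpath_append {H : Set (Finset I)} {k : ℕ} {γ₁ γ₂ : List (Finset I)}
    (h₁ : IsKPath H k γ₁) (h₂ : IsKPath H k γ₂) {a b : Finset I}
    (ha : γ₁.getLast? = some a) (hb : γ₂.head? = some b)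
    (hab : a ∪ b ∈ level H (k + 1)) : IsKPath H k (γ₁ ++ γ₂) := by
  refine ⟨by simp [h₁.1], ?_, ?_⟩
  · intro J hJ
    rcases List.mem_append.1 hJ with h | h
    exacts [h₁.2.1 J h, h₂.2.1 J h]
  · apply List.isChain_append.mpr
    refine ⟨h₁.2.2, h₂.2.2, ?_⟩
    intro x hx y hy
    rw [ha] at hx; rw [hb] at hy
    simp only [Option.mem_some_iff] at hx hy
    subst hx; subst hy; exact hab

lemma joins_append {γ₁ γ₂ : List (Finset I)} {x a b y : Finset I}
    (h₁ : Joins γ₁ x a) (h₂ : Joins γ₂ b y) : Joins (γ₁ ++ γ₂) x y := by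
  constructor
  · rw [List.head?_append, h₁.1]; rfl
  · rw [List.getLast?_append, h₂.2]; rfl

lemma single_kpath {H : Set (Finset I)} {k : ℕ} {J : Finset I}
    (h : J ∈ level H k) : IsKPath H k [J] :=
  ⟨by simp, by simpa using h, List.isChain_singleton _⟩

lemma adj_mem_block {H : Set (Finset I)} {D : NodalDatum H} {B : Set (Finset I)}
    (hB : IsSepBlock D B) {J₁ J₂ : Finset I} (h₁ : J₁ ∈ B)
    (h₂ : J₂ ∈ D.N ∩ level H 2) (hu : J₁ ∪ J₂ ∈ level H 3) : J₂ ∈ B := by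
  obtain ⟨⟨hne, hsub, hconn, hmax⟩, -⟩ := hB
  have hJ2lvl : J₂ ∈ level H 2 := h₂.2
  have key : KConnectedIn H 2 (insert J₂ B) := by
    have case1 : ∃ γ, IsKPath H 2 γ ∧ Joins γ J₂ J₂ ∧ ∀ K ∈ γ, K ∈ insert J₂ B :=
      ⟨[J₂], single_kpath hJ2lvl, ⟨rfl, rfl⟩, by simp⟩
    have case2 : ∀ y ∈ B, ∃ γ, IsKPath H 2 γ ∧ Joins γ J₂ y ∧
        ∀ K ∈ γ, K ∈ insert J₂ B := by
      intro y hy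
      obtain ⟨γ, hγ, hj, hsup⟩ := hconn J₁ h₁ y hy
      refine ⟨[J₂] ++ γ, kpath_append (single_kpath hJ2lvl) hγ rfl hj.1
        (by rwa [Finset.union_comm]), joins_append ⟨rfl, rfl⟩ hj, ?_⟩
      intro K hK
      rcases List.mem_append.1 hK with h | h
      · simp only [List.mem_singleton] at h
        exact Set.mem_insert_iff.mpr (Or.inl h)
      · exact Set.mem_insert_of_mem _ (hsup K h)
    have case3 : ∀ x ∈ B, ∃ γ, IsKPath H 2 γ ∧ Joins γ x J₂ ∧
        ∀ K ∈ γ, K ∈ insert J₂ B := by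
      intro x hx
      obtain ⟨γ, hγ, hj, hsup⟩ := hconn x hx J₁ h₁
      refine ⟨γ ++ [J₂], kpath_append hγ (single_kpath hJ2lvl) hj.2 rfl hu,
        joins_append hj ⟨rfl, rfl⟩, ?_⟩
      intro K hK
      rcases List.mem_append.1 hK with h | h
      · exact Set.mem_insert_of_mem _ (hsup K h)
      · simp only [List.mem_singleton] at h
        exact Set.mem_insert_iff.mpr (Or.inl h)
    intro x hx y hy
    rcases Set.mem_insert_iff.mp hx with hx' | hx' <;>
      rcases Set.mem_insert_iff.mp hy with hy' | hy'
    · rw [hx', hy']; exact case1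
    · rw [hx']; exact case2 y hy'
    · rw [hy']; exact case3 x hx'
    · obtain ⟨γ, hγ, hj, hsup⟩ := hconn x hx' y hy'
      exact ⟨γ, hγ, hj, fun K hK => Set.mem_insert_of_mem _ (hsup K hK)⟩
  have hins : insert J₂ B ⊆ D.N ∩ level H 2 := by
    intro z hz
    rcases hz with hz | hz
    · subst hz; exact h₂
    · exact hsub hz
  have := hmax (insert J₂ B) (Set.subset_insert _ _) hins key
  rw [← this]; exact Set.mem_insert _ _

lemma not_mem_block_of_not_N {H : Set (Finset I)} {D : NodalDatum H}
    {B : Set (Finset I)} (hB : IsSepBlock D B) {J : Finset I}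
    (hJ : J ∉ D.N) : J ∉ B := fun h => hJ (hB.1.2.1 h).1

/-- The key combinatorial lemma: for a triangle in `H`, the number of its edges lying in
a nodal separating block is even. -/
lemma star {H : Set (Finset I)} (hH : IsCSS H) {D : NodalDatum H} {B : Set (Finset I)}
    (hB : IsSepBlock D B) {a b c : I} (hp : IsKPath H 2 [{a, c}, {c, b}]) :
    (if ({a, b} : Finset I) ∈ B then 1 else 0) % 2
      = ((if ({a, c} : Finset I) ∈ B then (1 : ℕ) else 0)
          + (if ({c, b} : Finset I) ∈ B then 1 else 0)) % 2 := by
  obtain ⟨-, hmem, hch⟩ := hp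
  have h1 : ({a, c} : Finset I) ∈ level H 2 := hmem _ (by simp)
  have h2 : ({c, b} : Finset I) ∈ level H 2 := hmem _ (by simp)
  have hu : ({a, c} : Finset I) ∪ {c, b} ∈ level H 3 := by
    have := List.isChain_pair.mp hch
    exact this
  have hac : a ≠ c := by
    intro h; subst h
    have := h1.2; simp at this
  have hcb : c ≠ b := by
    intro h; subst h
    have := h2.2; simp at this
  have hKe : ({a, c} : Finset I) ∪ {c, b} = {a, c, b} := by
    ext x
    simp only [Finset.mem_union, Finset.mem_insert, Finset.mem_singleton]
    tauto
  rw [hKe] at hu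
  have hab : a ≠ b := by
    intro h; subst h
    have hcard := hu.2
    have h3 : ({a, c, a} : Finset I) = {a, c} := by
      ext x
      simp only [Finset.mem_insert, Finset.mem_singleton]
      tauto
    rw [h3, Finset.card_pair hac] at hcard
    exact absurd hcard (by norm_num)
  have hKH : ({a, c, b} : Finset I) ∈ H := hu.1
  have hsubK : ∀ x y : I, x ∈ ({a, c, b} : Finset I) → y ∈ ({a, c, b} : Finset I) →
      ({x, y} : Finset I) ⊆ ({a, c, b} : Finset I) := by
    intro x y hx hy
    intro z hz
    simp only [Finset.mem_insert, Finset.mem_singleton] at hz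
    rcases hz with h | h <;> subst h <;> assumption
  by_cases hKN : ({a, c, b} : Finset I) ∈ D.N
  · -- nodal triangle: two mixed edges, one pure edge
    set K : Finset I := {a, c, b} with hKdef
    have hPM : D.plus K ∪ D.minus K = K := D.union_eq K hKN
    have hdisjPM : Disjoint (D.plus K) (D.minus K) := D.disj K hKN
    have hside : ∀ x ∈ K, x ∈ D.plus K ∨ x ∈ D.minus K := by
      intro x hx
      rw [← hPM] at hx
      exact Finset.mem_union.mp hx
    have haK : a ∈ K := by simp [hKdef]
    have hcK : c ∈ K := by simp [hKdef]
    have hbK : b ∈ K := by simp [hKdef]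
    -- mixed edges are in N(2)
    have mixed : ∀ x y : I, x ≠ y → x ∈ K → y ∈ K → x ∈ D.plus K → y ∈ D.minus K →
        ({x, y} : Finset I) ∈ D.N ∩ level H 2 := by
      intro x y hxy hxK hyK hxP hyM
      have hsub : ({x, y} : Finset I) ⊆ K := hsubK x y hxK hyK
      have hN : ({x, y} : Finset I) ∈ D.N := by
        rw [D.mem_iff K hKN _ hsub]
        constructor
        · exact ⟨x, Finset.mem_inter.mpr ⟨by simp, hxP⟩⟩
        · exact ⟨y, Finset.mem_inter.mpr ⟨by simp, hyM⟩⟩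
      exact ⟨hN, hH.1 K hKH _ hsub, Finset.card_pair hxy⟩
    -- pure edges are not in N, hence not in B
    have pureP : ∀ x y : I, x ∈ D.plus K → y ∈ D.plus K →
        ({x, y} : Finset I) ∉ D.N := by
      intro x y hx hy hN
      have hsub : ({x, y} : Finset I) ⊆ K := by
        intro z hz
        simp only [Finset.mem_insert, Finset.mem_singleton] at hz
        rw [← hPM]
        rcases hz with h | h <;> subst h <;> exact Finset.mem_union_left _ (by assumption)
      obtain ⟨-, z, hz⟩ := (D.mem_iff K hKN _ hsub).mp hN
      obtain ⟨hz1, hz2⟩ := Finset.mem_inter.mp hz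
      simp only [Finset.mem_insert, Finset.mem_singleton] at hz1
      rcases hz1 with h | h <;> subst h
      · exact (Finset.disjoint_left.mp hdisjPM hx) hz2
      · exact (Finset.disjoint_left.mp hdisjPM hy) hz2
    have pureM : ∀ x y : I, x ∈ D.minus K → y ∈ D.minus K →
        ({x, y} : Finset I) ∉ D.N := by
      intro x y hx hy hN
      have hsub : ({x, y} : Finset I) ⊆ K := by
        intro z hz
        simp only [Finset.mem_insert, Finset.mem_singleton] at hz
        rw [← hPM]
        rcases hz with h | h <;> subst h <;> exact Finset.mem_union_right _ (by assumption)
      obtain ⟨⟨z, hz⟩, -⟩ := (D.mem_iff K hKN _ hsub).mp hN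
      obtain ⟨hz1, hz2⟩ := Finset.mem_inter.mp hz
      simp only [Finset.mem_insert, Finset.mem_singleton] at hz1
      rcases hz1 with h | h <;> subst h
      · exact (Finset.disjoint_left.mp hdisjPM hz2) hx
      · exact (Finset.disjoint_left.mp hdisjPM hz2) hy
    have iffB : ∀ e e' : Finset I, e ∈ D.N ∩ level H 2 → e' ∈ D.N ∩ level H 2 →
        e ∪ e' = K → (e ∈ B ↔ e' ∈ B) := by
      intro e e' he he' hee'
      constructor
      · intro h; exact adj_mem_block ⟨hB.1, hB.2⟩ h he' (by rw [hee']; exact hu)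
      · intro h
        exact adj_mem_block ⟨hB.1, hB.2⟩ h he (by rw [Finset.union_comm, hee']; exact hu)
    -- now the case analysis on the sides of a, b, c
    have e1e : ({b, a} : Finset I) = {a, b} := Finset.pair_comm b a
    have e2e : ({c, a} : Finset I) = {a, c} := Finset.pair_comm c a
    have e3e : ({b, c} : Finset I) = {c, b} := Finset.pair_comm b c
    have u13 : ({a, b} : Finset I) ∪ {c, b} = K := by
      ext x
      simp only [hKdef, Finset.mem_union, Finset.mem_insert, Finset.mem_singleton]
      tauto
    have u23 : ({a, c} : Finset I) ∪ {c, b} = K := by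
      ext x
      simp only [hKdef, Finset.mem_union, Finset.mem_insert, Finset.mem_singleton]
      tauto
    have u12 : ({a, b} : Finset I) ∪ {a, c} = K := by
      ext x
      simp only [hKdef, Finset.mem_union, Finset.mem_insert, Finset.mem_singleton]
      tauto
    rcases hside a haK with haP | haM <;> rcases hside c hcK with hcP | hcM <;>
      rcases hside b hbK with hbP | hbM
    · -- a,c,b all in plus: impossible
      exfalso
      obtain ⟨m, hm⟩ := D.minus_nonempty K hKN
      have hmK : m ∈ K := by rw [← hPM]; exact Finset.mem_union_right _ hm
      simp only [hKdef, Finset.mem_insert, Finset.mem_singleton] at hmK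
      rcases hmK with h | h | h <;> subst h <;>
        exact (Finset.disjoint_left.mp hdisjPM (by assumption)) hm
    · -- a∈P, c∈P, b∈M : pure {a,c}; mixed {a,b},{c,b}
      have hpure : ({a, c} : Finset I) ∉ B :=
        not_mem_block_of_not_N ⟨hB.1, hB.2⟩ (pureP a c haP hcP)
      have hiff : (({a, b} : Finset I) ∈ B) ↔ (({c, b} : Finset I) ∈ B) :=
        iffB _ _ (mixed a b hab haK hbK haP hbM) (mixed c b hcb hcK hbK hcP hbM) u13
      by_cases h : ({a, b} : Finset I) ∈ B
      · simp [h, hiff.mp h, hpure]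
      · have hy : ¬_ := fun hc => h (hiff.mpr hc)
        simp [h, hy, hpure]
    · -- a∈P, c∈M, b∈P : pure {a,b}; mixed {a,c},{c,b}(=¬{b,c})
      have hpure : ({a, b} : Finset I) ∉ B :=
        not_mem_block_of_not_N ⟨hB.1, hB.2⟩ (pureP a b haP hbP)
      have hmix3 : ({c, b} : Finset I) ∈ D.N ∩ level H 2 := by
        rw [← e3e]; exact mixed b c hcb.symm hbK hcK hbP hcM
      have hiff : (({a, c} : Finset I) ∈ B) ↔ (({c, b} : Finset I) ∈ B) :=
        iffB _ _ (mixed a c hac haK hcK haP hcM) hmix3 u23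
      by_cases h : ({a, c} : Finset I) ∈ B
      · simp [h, hiff.mp h, hpure]
      · have hy : ¬_ := fun hc => h (hiff.mpr hc)
        simp [h, hy, hpure]
    · -- a∈P, c∈M, b∈M : pure {c,b}; mixed {a,b},{a,c}
      have hpure : ({c, b} : Finset I) ∉ B :=
        not_mem_block_of_not_N ⟨hB.1, hB.2⟩ (pureM c b hcM hbM)
      have hiff : (({a, b} : Finset I) ∈ B) ↔ (({a, c} : Finset I) ∈ B) :=
        iffB _ _ (mixed a b hab haK hbK haP hbM) (mixed a c hac haK hcK haP hcM) u12
      by_cases h : ({a, b} : Finset I) ∈ B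
      · simp [h, hiff.mp h, hpure]
      · have hy : ¬_ := fun hc => h (hiff.mpr hc)
        simp [h, hy, hpure]
    · -- a∈M, c∈P, b∈P : pure {c,b}; mixed {a,b}(={b,a}),{a,c}(={c,a})
      have hpure : ({c, b} : Finset I) ∉ B :=
        not_mem_block_of_not_N ⟨hB.1, hB.2⟩ (pureP c b hcP hbP)
      have hmix1 : ({a, b} : Finset I) ∈ D.N ∩ level H 2 := by
        rw [← e1e]; exact mixed b a hab.symm hbK haK hbP haM
      have hmix2 : ({a, c} : Finset I) ∈ D.N ∩ level H 2 := by
        rw [← e2e]; exact mixed c a hac.symm hcK haK hcP haM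
      have hiff : (({a, b} : Finset I) ∈ B) ↔ (({a, c} : Finset I) ∈ B) :=
        iffB _ _ hmix1 hmix2 u12
      by_cases h : ({a, b} : Finset I) ∈ B
      · simp [h, hiff.mp h, hpure]
      · have hy : ¬_ := fun hc => h (hiff.mpr hc)
        simp [h, hy, hpure]
    · -- a∈M, c∈P, b∈M : pure {a,b}; mixed {a,c}(={c,a}),{c,b}
      have hpure : ({a, b} : Finset I) ∉ B :=
        not_mem_block_of_not_N ⟨hB.1, hB.2⟩ (pureM a b haM hbM)
      have hmix2 : ({a, c} : Finset I) ∈ D.N ∩ level H 2 := by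
        rw [← e2e]; exact mixed c a hac.symm hcK haK hcP haM
      have hiff : (({a, c} : Finset I) ∈ B) ↔ (({c, b} : Finset I) ∈ B) :=
        iffB _ _ hmix2 (mixed c b hcb hcK hbK hcP hbM) u23
      by_cases h : ({a, c} : Finset I) ∈ B
      · simp [h, hiff.mp h, hpure]
      · have hy : ¬_ := fun hc => h (hiff.mpr hc)
        simp [h, hy, hpure]
    · -- a∈M, c∈M, b∈P : pure {a,c}; mixed {a,b}(={b,a}),{c,b}(={b,c})
      have hpure : ({a, c} : Finset I) ∉ B :=
        not_mem_block_of_not_N ⟨hB.1, hB.2⟩ (pureM a c haM hcM)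
      have hmix1 : ({a, b} : Finset I) ∈ D.N ∩ level H 2 := by
        rw [← e1e]; exact mixed b a hab.symm hbK haK hbP haM
      have hmix3 : ({c, b} : Finset I) ∈ D.N ∩ level H 2 := by
        rw [← e3e]; exact mixed b c hcb.symm hbK hcK hbP hcM
      have hiff : (({a, b} : Finset I) ∈ B) ↔ (({c, b} : Finset I) ∈ B) :=
        iffB _ _ hmix1 hmix3 u13
      by_cases h : ({a, b} : Finset I) ∈ B
      · simp [h, hiff.mp h, hpure]
      · have hy : ¬_ := fun hc => h (hiff.mpr hc)
        simp [h, hy, hpure]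
    · -- a,c,b all in minus: impossible
      exfalso
      obtain ⟨m, hm⟩ := D.plus_nonempty K hKN
      have hmK : m ∈ K := by rw [← hPM]; exact Finset.mem_union_left _ hm
      simp only [hKdef, Finset.mem_insert, Finset.mem_singleton] at hmK
      rcases hmK with h | h | h <;> subst h <;>
        exact (Finset.disjoint_left.mp hdisjPM hm) (by assumption)
  · -- K ∉ N: no edge of K is in B
    have hno : ∀ x y : I, x ∈ ({a, c, b} : Finset I) → y ∈ ({a, c, b} : Finset I) →
        ({x, y} : Finset I) ∉ B := by
      intro x y hx hy h
      have hstar := hB.2 h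
      exact hKN (hstar.2 _ hKH (hsubK x y hx hy))
    have n1 : ({a, b} : Finset I) ∉ B := hno a b (by simp) (by simp)
    have n2 : ({a, c} : Finset I) ∉ B := hno a c (by simp) (by simp)
    have n3 : ({c, b} : Finset I) ∉ B := hno c b (by simp) (by simp)
    simp [n1, n2, n3]

lemma kappa_middle (B : Set (Finset I)) (δ ρ ε ε' : List (Finset I))
    (hε : ε ≠ []) (hε' : ε' ≠ []) (hh : ε.head? = ε'.head?)
    (hl : ε.getLast? = ε'.getLast?) (hk : kappa B ε % 2 = kappa B ε' % 2) :
    kappa B (δ ++ ε ++ ρ) % 2 = kappa B (δ ++ ε' ++ ρ) % 2 := by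
  rw [List.append_assoc, List.append_assoc, kappa_append B δ (ε ++ ρ),
    kappa_append B δ (ε' ++ ρ), kappa_append B ε ρ, kappa_append B ε' ρ,
    List.head?_append_of_ne_nil _ hε, List.head?_append_of_ne_nil _ hε', hh, hl]
  omega

lemma elem_parity {H : Set (Finset I)} (hH : IsCSS H) {D : NodalDatum H}
    {B : Set (Finset I)} (hB : IsSepBlock D B) {γ₁ γ₂ : List (Finset I)}
    (h : ElemHomotopy H γ₁ γ₂) : kappa B γ₁ % 2 = kappa B γ₂ % 2 := by
  obtain ⟨δ, ε₁, ε₂, ρ, hpair, rfl, rfl⟩ := h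
  suffices h' : ∀ ε ε' : List (Finset I), ElemPairCore H ε ε' →
      kappa B (δ ++ ε ++ ρ) % 2 = kappa B (δ ++ ε' ++ ρ) % 2 by
    rcases hpair with hp | hp
    exacts [h' _ _ hp, (h' _ _ hp).symm]
  intro ε ε' hcore
  rcases hcore with rfl | ⟨i₁, i₂, rfl, rfl⟩ | ⟨i₁, i₂, i₃, rfl, rfl, hp⟩
  · rfl
  · refine kappa_middle B δ ρ _ _ (by simp) (by simp) (by simp) (by simp) ?_
    have he : subSup [({i₁} : Finset I), {i₂}, {i₁}] = [{i₁} ∪ {i₂}, {i₁} ∪ {i₂}] := by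
      simp [subSup, Finset.union_comm]
    rw [kappa_eq_kap, kappa_eq_kap, he]
    show List.countP _ _ % 2 = List.countP _ _ % 2
    by_cases h : ({i₁, i₂} : Finset I) ∈ B <;>
      simp [subSup, List.countP_cons, h]
  · refine kappa_middle B δ ρ _ _ (by simp) (by simp) (by simp) (by simp) ?_
    have hs : ({i₁} : Finset I) ∪ {i₂} = {i₁, i₂} := rfl
    have hs13 : ({i₁} : Finset I) ∪ {i₃} = {i₁, i₃} := rfl
    have hs32 : ({i₃} : Finset I) ∪ {i₂} = {i₃, i₂} := rfl
    have e1 : kappa B [({i₁} : Finset I), {i₂}]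
        = if ({i₁, i₂} : Finset I) ∈ B then 1 else 0 := by
      rw [kappa_eq_kap]
      show kap B [({i₁} : Finset I) ∪ {i₂}] = _
      rw [kap_singleton, hs]
    have e2 : kappa B [({i₁} : Finset I), {i₃}, {i₂}]
        = (if ({i₁, i₃} : Finset I) ∈ B then 1 else 0)
          + (if ({i₃, i₂} : Finset I) ∈ B then 1 else 0) := by
      rw [kappa_eq_kap]
      show kap B ([({i₁} : Finset I) ∪ {i₃}] ++ [({i₃} : Finset I) ∪ {i₂}]) = _
      rw [kap_append, kap_singleton, kap_singleton, hs13, hs32]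
    rw [e1, e2]
    exact star hH hB hp
  
lemma homot_parity {H A : Set (Finset I)} (hH : IsCSS H) {D : NodalDatum H}
    {B : Set (Finset I)} (hB : IsSepBlock D B) {γ γ' : List (Finset I)}
    (h : HomotopicIn H A γ γ') : kappa B γ % 2 = kappa B γ' % 2 := by
  obtain ⟨-, h⟩ := h
  induction h with
  | refl => rfl
  | tail h₁ h₂ ih => exact ih.trans (elem_parity hH hB h₂.1)

end Aux

/-- For a nodal separating block `B` of a simply connected combinatorial
strata structure and any `i ∈ I`, the sets `A_B(i)` and `B_B(i)` are nonempty, disjoint,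
and their union is `H(1)`. -/
theorem ABset_BBset_partition
    {I : Type*} [Fintype I] [DecidableEq I] (H : Set (Finset I))
    (hH : IsCSS H) (hsc : SimplyConnected H)
    (D : NodalDatum H) (B : Set (Finset I)) (hB : IsSepBlock D B) :
    ∀ i : I, (ABset H B i).Nonempty ∧ (BBset H B i).Nonempty ∧
      ABset H B i ∩ BBset H B i = ∅ ∧ ABset H B i ∪ BBset H B i = level H 1 := by
  intro i
  have hi1 : ({i} : Finset I) ∈ level H 1 := ⟨hH.2 i, by simp⟩
  have hdisj : ABset H B i ∩ BBset H B i = ∅ := by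
    ext J
    simp only [Set.mem_inter_iff, Set.mem_empty_iff_false, iff_false]
    rintro ⟨⟨hJ, γ, hγ, hj, hev⟩, ⟨-, γ', hγ', hj', hodd⟩⟩
    have hhom := hsc.2 γ γ' hγ hγ' hγ.2.1 hγ'.2.1
      (by rw [hj.1, hj'.1]) (by rw [hj.2, hj'.2])
    have hpar := homot_parity hH hB hhom
    obtain ⟨k, hk⟩ := hev
    obtain ⟨m, hm⟩ := hodd
    omega
  have hun : ABset H B i ∪ BBset H B i = level H 1 := by
    ext J
    constructor
    · rintro (⟨hJ, -⟩ | ⟨hJ, -⟩) <;> exact hJ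
    · intro hJ
      obtain ⟨γ, hγ, hjoins, -⟩ := hsc.1 {i} hi1 J hJ
      rcases Nat.even_or_odd (kappa B γ) with h | h
      · exact Or.inl ⟨hJ, γ, hγ, hjoins, h⟩
      · exact Or.inr ⟨hJ, γ, hγ, hjoins, h⟩
  obtain ⟨J0, hJ0⟩ := hB.1.1
  have hJ0N := hB.1.2.1 hJ0
  obtain ⟨a, b, hab, hJ0e⟩ := Finset.card_eq_two.mp hJ0N.2.2
  have haH : ({a} : Finset I) ∈ level H 1 := ⟨hH.2 a, by simp⟩
  have hbH : ({b} : Finset I) ∈ level H 1 := ⟨hH.2 b, by simp⟩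
  obtain ⟨γ, hγ, hjoins, -⟩ := hsc.1 {i} hi1 {a} haH
  have hunion : ({a} : Finset I) ∪ {b} = J0 := by rw [hJ0e]; rfl
  have hpath' : IsKPath H 1 (γ ++ [{b}]) :=
    kpath_append hγ (single_kpath hbH) hjoins.2 rfl (by rw [hunion]; exact hJ0N.2)
  have hjoins' : Joins (γ ++ [{b}]) {i} {b} := joins_append hjoins ⟨rfl, rfl⟩
  have hk' : kappa B (γ ++ [{b}]) = kappa B γ + 1 := by
    rw [kappa_append, hjoins.2]
    show kappa B γ + kap B [({a} : Finset I) ∪ {b}] + kappa B [{b}] = _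
    rw [kap_singleton, hunion, if_pos hJ0]
    have hb0 : kappa B [({b} : Finset I)] = 0 := rfl
    omega
  rcases Nat.even_or_odd (kappa B γ) with h | h
  · refine ⟨⟨{a}, haH, γ, hγ, hjoins, h⟩,
      ⟨{b}, hbH, γ ++ [{b}], hpath', hjoins', ?_⟩, hdisj, hun⟩
    rw [hk']; exact Even.add_one h
  · refine ⟨⟨{b}, hbH, γ ++ [{b}], hpath', hjoins', ?_⟩,
      ⟨{a}, haH, γ, hγ, hjoins, h⟩, hdisj, hun⟩
    rw [hk']; exact Odd.add_one h
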